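/- Suppose b* ∈ R^{2ℓ} is optimal for minimizing 1ᵀ b subject to b ≥ 0 and [D,−D] b = w, and suppose index j satisfies b*_j > 0 while the j-th column v_j of [D,−D] can be written as v_j = Σ_i c_i v_i with c ≥ 0, c_j = 0, and Σ_i c_i < 1. Then we reach a contradiction; hence every optimal b* has b*_j = 0 for all such columns j. -/

import Mathlib

open Matrix

/-- If `b*` is optimal for `min 1ᵀb s.t. b ≥ 0, [D,−D]b = w`, then `b*_j = 0`
for every column `j` that is a conical combination of the other columns with
coefficient sum `< 1`: assuming `b*_j > 0` yields a contradiction. -/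
theorem optimal_unused_interior_column {m ℓ : ℕ} (D : Matrix (Fin m) (Fin ℓ) ℝ)
    (w : Fin m → ℝ) (bstar : Fin ℓ ⊕ Fin ℓ → ℝ)
    (hfeas : (∀ j, 0 ≤ bstar j) ∧ (Matrix.fromCols D (-D)).mulVec bstar = w)
    (hopt : ∀ b : Fin ℓ ⊕ Fin ℓ → ℝ, (∀ j, 0 ≤ b j) →
      (Matrix.fromCols D (-D)).mulVec b = w → (∑ j, bstar j) ≤ ∑ j, b j)
    (j : Fin ℓ ⊕ Fin ℓ) (hj : 0 < bstar j)
    (c : Fin ℓ ⊕ Fin ℓ → ℝ) (hc : ∀ i, 0 ≤ c i) (hcj : c j = 0)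
    (hcsum : (∑ i, c i) < 1)
    (hcol : (fun i => Matrix.fromCols D (-D) i j) =
      ∑ i, c i • (fun k => Matrix.fromCols D (-D) k i)) :
    False := by
  classical
  obtain ⟨hnn, heq⟩ := hfeas
  set A := Matrix.fromCols D (-D) with hA
  set b : Fin ℓ ⊕ Fin ℓ → ℝ :=
    fun i => bstar i + bstar j * c i - (if i = j then bstar j else 0) with hb
  have hbnn : ∀ i, 0 ≤ b i := by
    intro i
    by_cases h : i = j
    · subst h; simp [hb, hcj]
    · simpa [hb, if_neg h] using add_nonneg (hnn i) (mul_nonneg hj.le (hc i))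
  have hcolk : ∀ k, A k j = ∑ i, c i * A k i := by
    intro k
    have := congrFun hcol k
    simpa [Finset.sum_apply] using this
  have hfeq : A.mulVec b = w := by
    funext k
    have h1 : A.mulVec b k = ∑ x, (A k x * bstar x + bstar j * (c x * A k x)
        - (if x = j then A k j * bstar j else 0)) := by
      simp only [Matrix.mulVec, dotProduct, hb]
      apply Finset.sum_congr rfl
      intro i _
      by_cases h : i = j
      · subst h; simp; ring
      · simp [if_neg h]; ring
    rw [h1, Finset.sum_sub_distrib, Finset.sum_add_distrib,
      Finset.sum_ite_eq', ← Finset.mul_sum, ← hcolk k]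
    have h2 : A.mulVec bstar k = w k := by rw [heq]
    simp only [Matrix.mulVec, dotProduct] at h2
    simp only [Finset.mem_univ, if_true]
    rw [h2]; ring
  have hsum : ∑ i, b i = (∑ i, bstar i) + bstar j * (∑ i, c i) - bstar j := by
    simp only [hb]
    rw [Finset.sum_sub_distrib, Finset.sum_add_distrib,
      Finset.sum_ite_eq', ← Finset.mul_sum]
    simp
  have hlt : ∑ i, b i < ∑ i, bstar i := by
    rw [hsum]
    have : bstar j * (∑ i, c i) < bstar j * 1 := mul_lt_mul_of_pos_left hcsum hj
    linarith
  exact absurd (hopt b hbnn hfeq) (not_le.mpr hlt)
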